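/- Let N ≥ 2 be an integer, let |ψ_N⟩ = (|0^N⟩ + |1^N⟩)/√2 ∈ (ℂ²)^{⊗N}, and for each of the N qubits v let O_v = I + i·tan(π/(2N))·Z_v, where Z_v is the Pauli Z operator on qubit v tensored with the identity elsewhere. Then ⟨ψ_N| Π_{v=1}^{N} O_v |ψ_N⟩ = 0, and for every v, ‖O_v − I‖ = tan(π/(2N)) ≤ 2/N. In particular, ⟨ψ_N| Π_v O_v |ψ_N⟩ = (1/2)[(1 + i·tan(π/(2N)))^N + (1 − i·tan(π/(2N)))^N] = 0. -/

import Mathlib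

open scoped Classical Matrix

namespace Stmt12

/-- The spin `±1` associated to a Boolean configuration value. -/
def spin (b : Bool) : ℝ := if b then 1 else -1

/-- The Pauli `Z` operator on the `v`-th of `N` qubits, tensored with the identity
elsewhere on `(ℂ²)^{⊗N}` (a diagonal matrix with entry `±1` according to the value
of the configuration at `v`). -/
noncomputable def pauliZ {N : ℕ} (v : Fin N) :
    Matrix (Fin N → Bool) (Fin N → Bool) ℂ :=
  fun x y => if x = y then ((spin (x v) : ℝ) : ℂ) else 0

/-- The operator `O_v = I + i·tan(π/(2N))·Z_v` on `(ℂ²)^{⊗N}`. -/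
noncomputable def Ov {N : ℕ} (v : Fin N) : Matrix (Fin N → Bool) (Fin N → Bool) ℂ :=
  1 + (Complex.I * (Real.tan (Real.pi / (2 * N)) : ℝ)) • pauliZ v

/-- The GHZ state `|ψ_N⟩ = (|0^N⟩ + |1^N⟩)/√2` as a vector in `(ℂ²)^{⊗N}`. -/
noncomputable def ghz (N : ℕ) : (Fin N → Bool) → ℂ :=
  fun x => if (∀ v, x v = false) ∨ (∀ v, x v = true) then ((Real.sqrt 2)⁻¹ : ℝ) else 0

/-- The ordered product of matrices over a finite (linearly ordered) index set (the
operators `O_v` pairwise commute, so the order is immaterial). -/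
noncomputable def oprod {ι : Type*} [LinearOrder ι] {n : Type*} [Fintype n] [DecidableEq n]
    (S : Finset ι) (f : ι → Matrix n n ℂ) : Matrix n n ℂ :=
  ((S.sort (· ≤ ·)).map f).prod

/-- The operator norm of a matrix, viewed as an operator on Euclidean space. -/
noncomputable def opNorm {n : Type*} [Fintype n] [DecidableEq n]
    (M : Matrix n n ℂ) : ℝ :=
  ‖Matrix.toEuclideanCLM (𝕜 := ℂ) M‖

lemma list_prod_diagonal {ι : Type*} {n : Type*} [Fintype n] [DecidableEq n]
    (l : List ι) (d : ι → n → ℂ) :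
    ((l.map (fun v => Matrix.diagonal (d v))).prod)
      = Matrix.diagonal (fun x => (l.map (fun v => d v x)).prod) := by
  induction l with
  | nil => simp
  | cons a l ih =>
      simp only [List.map_cons, List.prod_cons, ih, Matrix.diagonal_mul_diagonal]
lemma pauliZ_diag {N : ℕ} (v : Fin N) :
    pauliZ v = Matrix.diagonal (fun x => ((spin (x v) : ℝ) : ℂ)) := rfl
lemma Ov_diag {N : ℕ} (v : Fin N) :
    Ov v = Matrix.diagonal
      (fun x => 1 + Complex.I * (Real.tan (Real.pi / (2 * N)) : ℝ) * ((spin (x v) : ℝ) : ℂ)) := by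
  ext x y
  rw [Ov, Matrix.add_apply, Matrix.smul_apply]
  by_cases h : x = y
  · subst h
    simp only [pauliZ, eq_self_iff_true, if_true, if_pos, Matrix.one_apply_eq, Matrix.diagonal_apply_eq, smul_eq_mul]
  · simp only [pauliZ, if_neg h, Matrix.one_apply_ne h, Matrix.diagonal_apply_ne _ h,
      smul_zero, add_zero]
lemma sort_map_prod {ι : Type*} [LinearOrder ι] [Fintype ι] (g : ι → ℂ) :
    (((Finset.univ : Finset ι).sort (· ≤ ·)).map g).prod = ∏ v, g v := by
  rw [Finset.prod_eq_multiset_prod, ← Finset.sort_eq (s := Finset.univ) (r := (· ≤ ·))]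
  rfl
lemma oprod_diag (N : ℕ) :
    oprod (Finset.univ : Finset (Fin N)) Ov
      = Matrix.diagonal (fun x =>
          ∏ v : Fin N, (1 + Complex.I * (Real.tan (Real.pi / (2 * N)) : ℝ) * ((spin (x v) : ℝ) : ℂ))) := by
  unfold oprod
  have hOv : (Ov : Fin N → Matrix (Fin N → Bool) (Fin N → Bool) ℂ)
      = fun v => Matrix.diagonal
        (fun x => 1 + Complex.I * (Real.tan (Real.pi / (2 * N)) : ℝ) * ((spin (x v) : ℝ) : ℂ)) :=
    funext Ov_diag
  rw [hOv]
  rw [list_prod_diagonal]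
  exact congrArg Matrix.diagonal (funext fun x => sort_map_prod _)
lemma ghz_apply_false {N : ℕ} : ghz N (fun _ => false) = ((Real.sqrt 2)⁻¹ : ℝ) := by
  simp [ghz]
lemma ghz_apply_true {N : ℕ} : ghz N (fun _ => true) = ((Real.sqrt 2)⁻¹ : ℝ) := by
  simp [ghz]
lemma ghz_apply_other {N : ℕ} {x : Fin N → Bool} (h0 : x ≠ fun _ => false)
    (h1 : x ≠ fun _ => true) : ghz N x = 0 := by
  rw [ghz]
  rw [if_neg]
  rintro (h | h)
  · exact h0 (funext h)
  · exact h1 (funext h)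
lemma ghz_expect {N : ℕ} (hN : 1 ≤ N) (f : (Fin N → Bool) → ℂ) :
    star (ghz N) ⬝ᵥ (Matrix.diagonal f) *ᵥ ghz N
      = (1/2 : ℂ) * (f (fun _ => false) + f (fun _ => true)) := by
  have hne : (fun _ => false : Fin N → Bool) ≠ (fun _ => true) := by
    intro h
    have := congrFun h ⟨0, by omega⟩
    simp at this
  have hsq : (((Real.sqrt 2)⁻¹ : ℝ) : ℂ) ^ 2 = (1/2 : ℂ) := by
    rw [← Complex.ofReal_pow]
    norm_num
  have key : ∀ x, star (ghz N) x * ((Matrix.diagonal f) *ᵥ ghz N) x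
      = star (ghz N x) * (f x * ghz N x) := by
    intro x
    rw [Matrix.mulVec_diagonal]
    rfl
  rw [dotProduct]
  simp only [key]
  rw [Fintype.sum_eq_add (fun _ => false) (fun _ => true) hne ?_]
  · rw [ghz_apply_false, ghz_apply_true]
    rw [Complex.star_def, Complex.conj_ofReal]
    ring_nf
    rw [hsq]
    ring
  · intro x ⟨h0, h1⟩
    rw [ghz_apply_other h0 h1]
    simp
lemma prod_true {N : ℕ} (c : ℂ) :
    (∏ v : Fin N, (1 + c * ((spin ((fun _ => true) v) : ℝ) : ℂ))) = (1 + c) ^ N := by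
  simp [spin]
lemma prod_false {N : ℕ} (c : ℂ) :
    (∏ v : Fin N, (1 + c * ((spin ((fun _ => false) v) : ℝ) : ℂ))) = (1 - c) ^ N := by
  simp [spin]
  ring_nf
lemma key_zero (N : ℕ) (hN : 2 ≤ N) :
    (1 + Complex.I * (Real.tan (Real.pi / (2 * N)) : ℝ)) ^ N +
      (1 - Complex.I * (Real.tan (Real.pi / (2 * N)) : ℝ)) ^ N = 0 := by
  set θ : ℝ := Real.pi / (2 * N) with hθ
  have hNpos : (0:ℝ) < N := by positivity
  have hθpos : 0 < θ := by positivity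
  have hθlt : θ < Real.pi / 2 := by
    have h2N : (2:ℝ) ≤ (N:ℝ) := by exact_mod_cast hN
    rw [hθ, div_lt_div_iff₀ (by positivity) (by norm_num)]
    nlinarith [Real.pi_pos]
  have hcos : 0 < Real.cos θ := Real.cos_pos_of_mem_Ioo ⟨by linarith, hθlt⟩
  have hcosC : ((Real.cos θ : ℝ) : ℂ) ≠ 0 := by
    exact_mod_cast hcos.ne'
  have hcosC' : Complex.cos ((θ:ℝ):ℂ) ≠ 0 := by
    rw [← Complex.ofReal_cos]; exact hcosC
  have h1 : (1 + Complex.I * (Real.tan θ : ℝ)) = Complex.exp (θ * Complex.I) / (Real.cos θ : ℝ) := by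
    rw [Complex.exp_mul_I, ← Complex.ofReal_cos, ← Complex.ofReal_sin,
      Real.tan_eq_sin_div_cos, eq_div_iff hcosC]
    push_cast
    field_simp [hcosC']
  have h2 : (1 - Complex.I * (Real.tan θ : ℝ)) = Complex.exp (-(θ * Complex.I)) / (Real.cos θ : ℝ) := by
    rw [← neg_mul, Complex.exp_mul_I, Complex.cos_neg, Complex.sin_neg,
      ← Complex.ofReal_cos, ← Complex.ofReal_sin,
      Real.tan_eq_sin_div_cos, eq_div_iff hcosC]
    push_cast
    field_simp [hcosC']
    ring
  have hNθ : (N : ℂ) * θ = (Real.pi / 2 : ℝ) := by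
    push_cast [hθ]
    have : (N:ℂ) ≠ 0 := by exact_mod_cast (by positivity : (0:ℝ) < N).ne'
    field_simp
  have hexp : Complex.exp ((Real.pi / 2 : ℝ) * Complex.I) = Complex.I := by
    rw [Complex.exp_mul_I]
    rw [← Complex.ofReal_cos, ← Complex.ofReal_sin, Real.cos_pi_div_two, Real.sin_pi_div_two]
    simp
  have hexp' : Complex.exp (-((Real.pi / 2 : ℝ) * Complex.I)) = -Complex.I := by
    rw [← neg_mul, ← Complex.ofReal_neg, Complex.exp_mul_I]
    rw [← Complex.ofReal_cos, ← Complex.ofReal_sin, Real.cos_neg, Real.sin_neg,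
      Real.cos_pi_div_two, Real.sin_pi_div_two]
    simp
  rw [h1, h2, div_pow, div_pow, ← Complex.exp_nat_mul, ← Complex.exp_nat_mul]
  rw [show (N:ℂ) * (θ * Complex.I) = ((N:ℂ) * θ) * Complex.I by ring, hNθ, hexp]
  rw [show (N:ℂ) * (-(θ * Complex.I)) = -(((N:ℂ) * θ) * Complex.I) by ring]
  rw [show (((N:ℂ) * θ) * Complex.I) = ((Real.pi/2 : ℝ):ℂ) * Complex.I by rw [hNθ], hexp']
  rw [← add_div]
  simp
lemma pauliZ_star {N : ℕ} (v : Fin N) : star (pauliZ v) = pauliZ v := by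
  ext x y
  rw [Matrix.star_eq_conjTranspose, Matrix.conjTranspose_apply]
  by_cases h : x = y
  · subst h
    simp [pauliZ, Complex.conj_ofReal]
  · simp [pauliZ, h, Ne.symm h]
lemma pauliZ_mul_self {N : ℕ} (v : Fin N) : pauliZ v * pauliZ v = 1 := by
  rw [pauliZ_diag, Matrix.diagonal_mul_diagonal, ← Matrix.diagonal_one]
  refine congrArg _ (funext fun x => ?_)
  rcases Bool.eq_false_or_eq_true (x v) with h | h <;> norm_num [h, spin]
lemma opNorm_pauliZ {N : ℕ} (v : Fin N) : opNorm (pauliZ v) = 1 := by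
  set A := Matrix.toEuclideanCLM (𝕜 := ℂ) (pauliZ v) with hA
  have hstar : star A * A = 1 := by
    rw [hA, ← map_star, ← map_mul, pauliZ_star, pauliZ_mul_self, map_one]
  have h1 : ‖A‖ * ‖A‖ = 1 := by
    rw [← CStarRing.norm_star_mul_self, hstar, norm_one]
  have := mul_self_eq_one_iff.mp h1
  rcases this with h | h
  · exact h
  · exfalso
    have := norm_nonneg A
    rw [h] at this
    linarith
lemma Ov_sub_one {N : ℕ} (v : Fin N) :
    Ov v - 1 = (Complex.I * (Real.tan (Real.pi / (2 * N)) : ℝ)) • pauliZ v := by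
  rw [Ov, add_sub_cancel_left]
lemma tan_nonneg' (N : ℕ) (hN : 2 ≤ N) : 0 ≤ Real.tan (Real.pi / (2 * N)) := by
  apply Real.tan_nonneg_of_nonneg_of_le_pi_div_two
  · positivity
  · rw [div_le_div_iff₀ (by positivity) (by norm_num)]
    have h2N : (2:ℝ) ≤ (N:ℝ) := by exact_mod_cast hN
    nlinarith [Real.pi_pos]
set_option synthInstance.maxHeartbeats 1000000 in
lemma opNorm_Ov_sub_one {N : ℕ} (hN : 2 ≤ N) (v : Fin N) :
    opNorm (Ov v - 1) = Real.tan (Real.pi / (2 * N)) := by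
  set c : ℂ := Complex.I * (Real.tan (Real.pi / (2 * N)) : ℝ) with hc
  rw [Ov_sub_one, opNorm, map_smul]
  rw [norm_smul c (Matrix.toEuclideanCLM (𝕜 := ℂ) (pauliZ v)), ← opNorm, opNorm_pauliZ, mul_one,
    hc, norm_mul, Complex.norm_I, one_mul, Complex.norm_real, Real.norm_eq_abs,
    abs_of_nonneg (tan_nonneg' N hN)]

lemma tan_le_two_div (N : ℕ) (hN : 2 ≤ N) :
    Real.tan (Real.pi / (2 * N)) ≤ 2 / N := by
  rcases eq_or_lt_of_le hN with h | h
  · subst h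
    rw [show Real.pi / (2 * (2:ℕ)) = Real.pi / 4 by norm_num, Real.tan_pi_div_four]
    norm_num
  · have h3N : (3:ℝ) ≤ (N:ℝ) := by exact_mod_cast h
    have hNpos : (0:ℝ) < N := by linarith
    set θ : ℝ := Real.pi / (2 * N) with hθ
    have hθpos : 0 < θ := by positivity
    have hθ6 : θ ≤ Real.pi / 6 := by
      rw [hθ, div_le_div_iff₀ (by positivity) (by norm_num)]
      nlinarith [Real.pi_pos]
    have hcos : Real.sqrt 3 / 2 ≤ Real.cos θ := by
      rw [← Real.cos_pi_div_six]
      apply Real.cos_le_cos_of_nonneg_of_le_pi hθpos.le _ hθ6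
      linarith [Real.pi_pos]
    have hsqrt3 : (0:ℝ) < Real.sqrt 3 := Real.sqrt_pos.mpr (by norm_num)
    have hsq3 : Real.sqrt 3 * Real.sqrt 3 = 3 := Real.mul_self_sqrt (by norm_num)
    have hsin : Real.sin θ ≤ θ := Real.sin_le hθpos.le
    have htan : Real.tan θ ≤ θ / (Real.sqrt 3 / 2) := by
      rw [Real.tan_eq_sin_div_cos]
      apply div_le_div₀ hθpos.le hsin (by positivity) hcos
    apply le_trans htan
    rw [div_le_div_iff₀ (by positivity) hNpos, hθ]
    rw [div_mul_eq_mul_div, div_le_iff₀ (by positivity)]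
    have hpi : Real.pi ≤ 2 * Real.sqrt 3 := by
      nlinarith [Real.pi_lt_d2, Real.sqrt_nonneg 3]
    nlinarith [mul_le_mul_of_nonneg_right hpi hNpos.le]

/-- **Theorem 8 of the paper.** For the GHZ state `|ψ_N⟩` (`N ≥ 2`) and the operators
`O_v = I + i·tan(π/(2N))·Z_v`, the expectation value `⟨ψ_N| Π_v O_v |ψ_N⟩` equals
`(1/2)[(1 + i·tan(π/(2N)))^N + (1 − i·tan(π/(2N)))^N] = 0`, while
`‖O_v − I‖ = tan(π/(2N)) ≤ 2/N` for every `v`. -/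
theorem ghz_zero_expectation (N : ℕ) (hN : 2 ≤ N) :
    (star (ghz N) ⬝ᵥ (oprod (Finset.univ : Finset (Fin N)) Ov) *ᵥ ghz N) =
        (1 / 2 : ℂ) *
          ((1 + Complex.I * (Real.tan (Real.pi / (2 * N)) : ℝ)) ^ N +
            (1 - Complex.I * (Real.tan (Real.pi / (2 * N)) : ℝ)) ^ N) ∧
    (star (ghz N) ⬝ᵥ (oprod (Finset.univ : Finset (Fin N)) Ov) *ᵥ ghz N) = 0 ∧
    (∀ v : Fin N, opNorm (Ov v - 1) = Real.tan (Real.pi / (2 * N))) ∧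
    Real.tan (Real.pi / (2 * N)) ≤ 2 / N := by
  have h1N : 1 ≤ N := by omega
  have hmain : (star (ghz N) ⬝ᵥ (oprod (Finset.univ : Finset (Fin N)) Ov) *ᵥ ghz N) =
      (1 / 2 : ℂ) *
        ((1 + Complex.I * (Real.tan (Real.pi / (2 * N)) : ℝ)) ^ N +
          (1 - Complex.I * (Real.tan (Real.pi / (2 * N)) : ℝ)) ^ N) := by
    rw [oprod_diag, ghz_expect h1N]
    rw [prod_false, prod_true]
    ring
  refine ⟨hmain, ?_, fun v => opNorm_Ov_sub_one hN v, tan_le_two_div N hN⟩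
  rw [hmain, key_zero N hN, mul_zero]

end Stmt12
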